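/- (Rate-distortion comparison for deterministic feature maps) Let X be a finite-valued random variable, g : A → B and h : B → C functions with f = h ∘ g, and let d : C × C → ℝ≥0 be a distortion measure. Define R_X(D) = min over conditional distributions p(x̂|x) with E[d(f(X), f(X̂))] ≤ D of I(X; X̂), and R_Y(D) = min over conditional distributions p(ŷ|y) (where Y = g(X)) with E[d(h(Y), h(Ŷ))] ≤ D of I(Y; Ŷ). Then for every D ≥ 0 for which the sets are nonempty, R_Y(D) ≤ R_X(D). -/

import Mathlib

open Real Finset

/-- Entropy-based mutual information of a finite joint distribution `j` on `A × B`. -/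
noncomputable def jointMI {A B : Type*} [Fintype A] [Fintype B] (j : A → B → ℝ) : ℝ :=
  (∑ a : A, Real.negMulLog (∑ b : B, j a b)) +
    (∑ b : B, Real.negMulLog (∑ a : A, j a b)) -
      ∑ a : A, ∑ b : B, Real.negMulLog (j a b)

/-- `p` is a probability distribution on the finite type `A`. -/
def IsDist {A : Type*} [Fintype A] (p : A → ℝ) : Prop :=
  (∀ a, 0 ≤ p a) ∧ ∑ a : A, p a = 1

/-- `k` is a Markov kernel (a conditional distribution) from `A` to `B`. -/
def IsKernel {A B : Type*} [Fintype B] (k : A → B → ℝ) : Prop :=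
  (∀ a b, 0 ≤ k a b) ∧ ∀ a, ∑ b : B, k a b = 1

noncomputable def klTerm (x y : ℝ) : ℝ := x * Real.log x - x * Real.log y

lemma klTerm_zero (y : ℝ) : klTerm 0 y = 0 := by simp [klTerm]

lemma log_sum_ineq {ι : Type*} (s : Finset ι) (x y : ι → ℝ)
    (hx : ∀ i ∈ s, 0 ≤ x i) (hy : ∀ i ∈ s, 0 ≤ y i)
    (hxy : ∀ i ∈ s, y i = 0 → x i = 0) :
    klTerm (∑ i ∈ s, x i) (∑ i ∈ s, y i) ≤ ∑ i ∈ s, klTerm (x i) (y i) := by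
  set X := ∑ i ∈ s, x i with hXdef
  set Y := ∑ i ∈ s, y i with hYdef
  by_cases hX0 : X = 0
  · have hx0 : ∀ i ∈ s, x i = 0 := (Finset.sum_eq_zero_iff_of_nonneg hx).1 hX0
    rw [hX0, klTerm_zero]
    exact Finset.sum_nonneg fun i hi => by rw [hx0 i hi, klTerm_zero]
  · have hXpos : 0 < X := lt_of_le_of_ne (Finset.sum_nonneg hx) (Ne.symm hX0)
    have hY0 : Y ≠ 0 := fun hY0 => hX0 (Finset.sum_eq_zero fun i hi =>
      hxy i hi ((Finset.sum_eq_zero_iff_of_nonneg hy).1 hY0 i hi))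
    have hYpos : 0 < Y := lt_of_le_of_ne (Finset.sum_nonneg hy) (Ne.symm hY0)
    have key : ∀ i ∈ s, x i - y i * X / Y ≤
        klTerm (x i) (y i) - x i * (Real.log X - Real.log Y) := by
      intro i hi
      rcases eq_or_lt_of_le (hx i hi) with h0 | hxi
      · rw [← h0, klTerm_zero]
        have h1 : 0 ≤ y i * X / Y := by
          have := hy i hi; positivity
        simp [← h0]; linarith
      · have hyi : 0 < y i := by
          rcases eq_or_lt_of_le (hy i hi) with h0' | hlt
          · exact absurd (hxy i hi h0'.symm) (by linarith)
          · exact hlt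
        have hs : 0 < y i * X / (x i * Y) := by positivity
        have hlog := Real.log_le_sub_one_of_pos hs
        have hexp : Real.log (y i * X / (x i * Y)) =
            Real.log (y i) + Real.log X - (Real.log (x i) + Real.log Y) := by
          rw [Real.log_div (by positivity) (by positivity),
            Real.log_mul (ne_of_gt hyi) (ne_of_gt hXpos),
            Real.log_mul (ne_of_gt hxi) (ne_of_gt hYpos)]
        have h1 := mul_le_mul_of_nonneg_left hlog (le_of_lt hxi)
        rw [mul_sub, mul_one] at h1
        have h2 : x i * (y i * X / (x i * Y)) = y i * X / Y := by
          field_simp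
        rw [h2, hexp] at h1
        simp only [klTerm]
        nlinarith [h1]
    have hsum := Finset.sum_le_sum key
    have h1 : ∑ i ∈ s, (x i - y i * X / Y) = 0 := by
      rw [Finset.sum_sub_distrib]
      have : ∑ i ∈ s, y i * X / Y = X := by
        rw [← Finset.sum_div, ← Finset.sum_mul, ← hYdef]
        field_simp
      rw [this, ← hXdef, sub_self]
    have h2 : ∑ i ∈ s, (klTerm (x i) (y i) - x i * (Real.log X - Real.log Y))
        = (∑ i ∈ s, klTerm (x i) (y i)) - klTerm X Y := by
      rw [Finset.sum_sub_distrib, ← Finset.sum_mul, ← hXdef]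
      simp only [klTerm]; ring
    rw [h1, h2] at hsum
    linarith

lemma jointMI_eq_klSum {A B : Type*} [Fintype A] [Fintype B] (j : A → B → ℝ)
    (hj : ∀ a b, 0 ≤ j a b) :
    jointMI j = ∑ a : A, ∑ b : B,
      klTerm (j a b) ((∑ b' : B, j a b') * (∑ a' : A, j a' b)) := by
  have hterm : ∀ a b, j a b * Real.log ((∑ b' : B, j a b') * (∑ a' : A, j a' b))
      = j a b * Real.log (∑ b' : B, j a b') + j a b * Real.log (∑ a' : A, j a' b) := by
    intro a b
    rcases eq_or_lt_of_le (hj a b) with h0 | hpos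
    · rw [← h0]; ring
    · have hμ : 0 < ∑ b' : B, j a b' :=
        lt_of_lt_of_le hpos (Finset.single_le_sum (fun b' _ => hj a b') (Finset.mem_univ b))
      have hν : 0 < ∑ a' : A, j a' b :=
        lt_of_lt_of_le hpos (Finset.single_le_sum (fun a' _ => hj a' b) (Finset.mem_univ a))
      rw [Real.log_mul hμ.ne' hν.ne', mul_add]
  simp only [klTerm, Finset.sum_sub_distrib]
  have e1 : ∑ a : A, ∑ b : B, j a b * Real.log ((∑ b' : B, j a b') * (∑ a' : A, j a' b))
      = (∑ a : A, (∑ b' : B, j a b') * Real.log (∑ b' : B, j a b'))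
        + (∑ b : B, (∑ a' : A, j a' b) * Real.log (∑ a' : A, j a' b)) := by
    rw [Finset.sum_congr rfl fun a _ => Finset.sum_congr rfl fun b _ => hterm a b]
    simp only [Finset.sum_add_distrib]
    congr 1
    · exact Finset.sum_congr rfl fun a _ => (Finset.sum_mul _ _ _).symm
    · rw [Finset.sum_comm]
      exact Finset.sum_congr rfl fun b _ => (Finset.sum_mul _ _ _).symm
  rw [e1]
  simp only [jointMI, Real.negMulLog, neg_mul, Finset.sum_neg_distrib]
  ring

lemma jointMI_push_le {A B A' B' : Type*} [Fintype A] [Fintype B] [Fintype A'] [Fintype B']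
    [DecidableEq A'] [DecidableEq B'] (j : A → B → ℝ) (hj : ∀ a b, 0 ≤ j a b)
    (f : A → A') (g : B → B') :
    jointMI (fun a' b' => ∑ a : A, ∑ b : B, if f a = a' ∧ g b = b' then j a b else 0)
      ≤ jointMI j := by
  set J : A' → B' → ℝ :=
    fun a' b' => ∑ a : A, ∑ b : B, if f a = a' ∧ g b = b' then j a b else 0 with hJdef
  have hJ : ∀ a' b', 0 ≤ J a' b' := fun a' b' =>
    Finset.sum_nonneg fun a _ => Finset.sum_nonneg fun b _ => by
      split
      · exact hj a b
      · exact le_rfl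
  have hμ' : ∀ a', (∑ b' : B', J a' b') = ∑ a : A, if f a = a' then (∑ b : B, j a b) else 0 := by
    intro a'
    simp only [hJdef]
    rw [Finset.sum_comm]
    refine Finset.sum_congr rfl fun a _ => ?_
    rw [Finset.sum_comm]
    by_cases hfa : f a = a'
    · simp [ite_and, hfa, Finset.sum_ite_eq]
    · simp [ite_and, hfa]
  have hν' : ∀ b', (∑ a' : A', J a' b') = ∑ b : B, if g b = b' then (∑ a : A, j a b) else 0 := by
    intro b'
    simp only [hJdef]
    rw [Finset.sum_comm]
    have step : ∀ a : A, (∑ a' : A', ∑ b : B, if f a = a' ∧ g b = b' then j a b else 0)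
        = ∑ b : B, if g b = b' then j a b else 0 := by
      intro a
      rw [Finset.sum_comm]
      refine Finset.sum_congr rfl fun b _ => ?_
      simp [ite_and, Finset.sum_ite_eq]
    rw [Finset.sum_congr rfl fun a _ => step a, Finset.sum_comm]
    refine Finset.sum_congr rfl fun b _ => ?_
    split <;> simp
  have rearrange : ∀ (t : A → B → ℝ),
      (∑ a' : A', ∑ b' : B', ∑ a : A, ∑ b : B, if f a = a' ∧ g b = b' then t a b else 0)
        = ∑ a : A, ∑ b : B, t a b := by
    intro t
    have h1 : ∀ a' : A', (∑ b' : B', ∑ a : A, ∑ b : B, if f a = a' ∧ g b = b' then t a b else 0)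
        = ∑ a : A, ∑ b : B, if f a = a' then t a b else 0 := by
      intro a'
      rw [Finset.sum_comm]
      refine Finset.sum_congr rfl fun a _ => ?_
      rw [Finset.sum_comm]
      refine Finset.sum_congr rfl fun b _ => ?_
      simp [ite_and, Finset.sum_ite_eq]
    rw [Finset.sum_congr rfl fun a' _ => h1 a', Finset.sum_comm]
    refine Finset.sum_congr rfl fun a _ => ?_
    rw [Finset.sum_comm]
    refine Finset.sum_congr rfl fun b _ => ?_
    simp [Finset.sum_ite_eq]
  have perpair : ∀ (a' : A') (b' : B'),
      klTerm (J a' b') ((∑ b'' : B', J a' b'') * (∑ a'' : A', J a'' b'))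
      ≤ ∑ a : A, ∑ b : B, if f a = a' ∧ g b = b' then
          klTerm (j a b) ((∑ b'' : B, j a b'') * (∑ a'' : A, j a'' b)) else 0 := by
    intro a' b'
    set xf : A × B → ℝ := fun ab => if f ab.1 = a' ∧ g ab.2 = b' then j ab.1 ab.2 else 0 with hxf
    set yf : A × B → ℝ := fun ab => if f ab.1 = a' ∧ g ab.2 = b' then
      (∑ b'' : B, j ab.1 b'') * (∑ a'' : A, j a'' ab.2) else 0 with hyf
    have hls := log_sum_ineq (Finset.univ : Finset (A × B)) xf yf
      (fun ab _ => by simp only [hxf]; split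
                      · exact hj _ _
                      · exact le_rfl)
      (fun ab _ => by simp only [hyf]; split
                      · exact mul_nonneg (Finset.sum_nonneg fun _ _ => hj _ _)
                          (Finset.sum_nonneg fun _ _ => hj _ _)
                      · exact le_rfl)
      (fun ab _ => by
        simp only [hxf, hyf]
        split
        · intro h0
          rcases mul_eq_zero.1 h0 with h | h
          · exact le_antisymm (h ▸ Finset.single_le_sum (fun b'' _ => hj ab.1 b'')
              (Finset.mem_univ ab.2)) (hj _ _)
          · exact le_antisymm (h ▸ Finset.single_le_sum (fun a'' _ => hj a'' ab.2)
              (Finset.mem_univ ab.1)) (hj _ _)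
        · exact fun _ => rfl)
    have ex : (∑ ab : A × B, xf ab) = J a' b' := by
      simp only [hxf, hJdef]; rw [Fintype.sum_prod_type]
    have ey : (∑ ab : A × B, yf ab) = (∑ b'' : B', J a' b'') * (∑ a'' : A', J a'' b') := by
      simp only [hyf]
      rw [hμ' a', hν' b', Finset.sum_mul_sum, Fintype.sum_prod_type]
      refine Finset.sum_congr rfl fun a _ => Finset.sum_congr rfl fun b _ => ?_
      by_cases h1 : f a = a' <;> by_cases h2 : g b = b' <;> simp [h1, h2]
    have ez : (∑ ab : A × B, klTerm (xf ab) (yf ab))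
        = ∑ a : A, ∑ b : B, if f a = a' ∧ g b = b' then
            klTerm (j a b) ((∑ b'' : B, j a b'') * (∑ a'' : A, j a'' b)) else 0 := by
      rw [Fintype.sum_prod_type]
      refine Finset.sum_congr rfl fun a _ => Finset.sum_congr rfl fun b _ => ?_
      simp only [hxf, hyf]
      split
      · rfl
      · exact klTerm_zero 0
    rw [ex, ey, ez] at hls
    exact hls
  rw [jointMI_eq_klSum J hJ, jointMI_eq_klSum j hj]
  calc (∑ a' : A', ∑ b' : B', klTerm (J a' b') ((∑ b'' : B', J a' b'') * (∑ a'' : A', J a'' b')))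
      ≤ ∑ a' : A', ∑ b' : B', ∑ a : A, ∑ b : B, if f a = a' ∧ g b = b' then
          klTerm (j a b) ((∑ b'' : B, j a b'') * (∑ a'' : A, j a'' b)) else 0 :=
        Finset.sum_le_sum fun a' _ => Finset.sum_le_sum fun b' _ => perpair a' b'
    _ = ∑ a : A, ∑ b : B, klTerm (j a b) ((∑ b' : B, j a b') * (∑ a' : A, j a' b)) :=
        rearrange (fun a b => klTerm (j a b) ((∑ b' : B, j a b') * (∑ a' : A, j a' b)))

lemma jointMI_nonneg {A B : Type*} [Fintype A] [Fintype B] (j : A → B → ℝ)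
    (hj : ∀ a b, 0 ≤ j a b) (hsum : ∑ a : A, ∑ b : B, j a b = 1) :
    0 ≤ jointMI j := by
  rw [jointMI_eq_klSum j hj]
  have hls := log_sum_ineq (Finset.univ : Finset (A × B))
    (fun ab => j ab.1 ab.2)
    (fun ab => (∑ b' : B, j ab.1 b') * (∑ a' : A, j a' ab.2))
    (fun ab _ => hj _ _)
    (fun ab _ => mul_nonneg (Finset.sum_nonneg fun _ _ => hj _ _)
      (Finset.sum_nonneg fun _ _ => hj _ _))
    (fun ab _ => by
      intro h0
      rcases mul_eq_zero.1 h0 with h | h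
      · exact le_antisymm (h ▸ Finset.single_le_sum (fun b' _ => hj ab.1 b')
          (Finset.mem_univ ab.2)) (hj _ _)
      · exact le_antisymm (h ▸ Finset.single_le_sum (fun a' _ => hj a' ab.2)
          (Finset.mem_univ ab.1)) (hj _ _))
  have ex : (∑ ab : A × B, j ab.1 ab.2) = 1 := by rw [Fintype.sum_prod_type]; exact hsum
  have ey : (∑ ab : A × B, (∑ b' : B, j ab.1 b') * (∑ a' : A, j a' ab.2)) = 1 := by
    rw [Fintype.sum_prod_type]
    have : ∀ a : A, (∑ b : B, (∑ b' : B, j a b') * (∑ a' : A, j a' b))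
        = (∑ b' : B, j a b') * (∑ b : B, ∑ a' : A, j a' b) := by
      intro a; rw [Finset.mul_sum]
    rw [Finset.sum_congr rfl fun a _ => this a, ← Finset.sum_mul]
    rw [hsum, one_mul, Finset.sum_comm, hsum]
  have ez : (∑ ab : A × B, klTerm (j ab.1 ab.2) ((∑ b' : B, j ab.1 b') * (∑ a' : A, j a' ab.2)))
      = ∑ a : A, ∑ b : B, klTerm (j a b) ((∑ b' : B, j a b') * (∑ a' : A, j a' b)) := by
    rw [Fintype.sum_prod_type]
  rw [ex, ey, ez] at hls
  simpa [klTerm] using hls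

theorem rate_distortion_comparison {A B C : Type*}
    [Fintype A] [Fintype B] [Fintype C] [DecidableEq B]
    (p : A → ℝ) (hp : IsDist p)
    (g : A → B) (h : B → C) (d : C → C → ℝ) (hd : ∀ c c', 0 ≤ d c c')
    (D : ℝ) (hD : 0 ≤ D)
    -- the distribution of `Y = g(X)` induced by `p` through `g`
    (q : B → ℝ) (hq : ∀ b, q b = ∑ a : A, if g a = b then p a else 0)
    -- the sets of achievable rates for quantizing `X` and `Y` at distortion `D`
    (SX SY : Set ℝ)
    (hSX : SX = {r | ∃ k : A → A → ℝ, IsKernel k ∧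
      (∑ x : A, ∑ x' : A, p x * k x x' * d (h (g x)) (h (g x'))) ≤ D ∧
      r = jointMI (fun x x' => p x * k x x')})
    (hSY : SY = {r | ∃ k : B → B → ℝ, IsKernel k ∧
      (∑ y : B, ∑ y' : B, q y * k y y' * d (h y) (h y')) ≤ D ∧
      r = jointMI (fun y y' => q y * k y y')})
    (hX : SX.Nonempty) (hY : SY.Nonempty) :
    sInf SY ≤ sInf SX := by
  obtain ⟨hp0, hp1⟩ := hp
  have hq0 : ∀ b, 0 ≤ q b := by
    intro b; rw [hq]
    exact Finset.sum_nonneg fun a _ => by split <;> [exact hp0 a; exact le_rfl]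
  have hqsum : ∑ b : B, q b = 1 := by
    rw [Finset.sum_congr rfl fun b _ => hq b, Finset.sum_comm]
    have e : ∀ a : A, (∑ b : B, if g a = b then p a else 0) = p a :=
      fun a => by simp [Finset.sum_ite_eq]
    rw [Finset.sum_congr rfl fun a _ => e a]
    exact hp1
  -- SY is bounded below by 0
  have hbdd : BddBelow SY := by
    refine ⟨0, fun r hr => ?_⟩
    rw [hSY] at hr
    obtain ⟨k, hk, _, rfl⟩ := hr
    refine jointMI_nonneg _ (fun y y' => mul_nonneg (hq0 y) (hk.1 y y')) ?_
    have : ∀ y : B, ∑ y' : B, q y * k y y' = q y := by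
      intro y; rw [← Finset.mul_sum, hk.2 y, mul_one]
    rw [Finset.sum_congr rfl fun y _ => this y]; exact hqsum
  refine le_csInf hX ?_
  intro r hr
  rw [hSX] at hr
  obtain ⟨k, hk, hdist, rfl⟩ := hr
  -- the pushforward joint distribution
  set J : B → B → ℝ := fun y y' => ∑ x : A, ∑ x' : A,
    if g x = y ∧ g x' = y' then p x * k x x' else 0 with hJdef
  have hJnn : ∀ y y', 0 ≤ J y y' := fun y y' =>
    Finset.sum_nonneg fun x _ => Finset.sum_nonneg fun x' _ => by
      split
      · exact mul_nonneg (hp0 x) (hk.1 x x')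
      · exact le_rfl
  have hJrow : ∀ y, ∑ y' : B, J y y' = q y := by
    intro y
    simp only [hJdef]
    rw [Finset.sum_comm]
    have step : ∀ x : A, (∑ y' : B, ∑ x' : A, if g x = y ∧ g x' = y' then p x * k x x' else 0)
        = if g x = y then p x else 0 := by
      intro x
      rw [Finset.sum_comm]
      by_cases hgx : g x = y
      · simp only [ite_and, hgx, if_true]
        have inner : ∀ x' : A, (∑ y' : B, if g x' = y' then p x * k x x' else 0)
            = p x * k x x' := fun x' => by simp [Finset.sum_ite_eq]
        rw [Finset.sum_congr rfl fun x' _ => inner x', ← Finset.mul_sum, hk.2 x, mul_one]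
      · simp [ite_and, hgx]
    rw [Finset.sum_congr rfl fun x _ => step x, hq]
  -- the quantizer for Y
  set k' : B → B → ℝ := fun y y' =>
    if q y = 0 then (if y' = y then 1 else 0) else J y y' / q y with hk'def
  have hqk' : ∀ y y', q y * k' y y' = J y y' := by
    intro y y'
    simp only [hk'def]
    by_cases hqy : q y = 0
    · simp only [hqy, if_true, zero_mul]
      symm
      refine Finset.sum_eq_zero fun x _ => Finset.sum_eq_zero fun x' _ => ?_
      split
      · rename_i hcond
        have hpx : p x = 0 := by
          have := (Finset.sum_eq_zero_iff_of_nonneg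
            (fun a _ => by split <;> [exact hp0 a; exact le_rfl])).1 ((hq y).symm.trans hqy) x
            (Finset.mem_univ x)
          simpa [hcond.1] using this
        rw [hpx, zero_mul]
      · rfl
    · simp only [hqy, if_false]
      field_simp
  have hker' : IsKernel k' := by
    constructor
    · intro y y'
      simp only [hk'def]
      split
      · split <;> norm_num
      · rename_i hqy
        exact div_nonneg (hJnn y y') (hq0 y)
    · intro y
      simp only [hk'def]
      by_cases hqy : q y = 0
      · simp [hqy]
      · simp only [hqy, if_false]
        rw [← Finset.sum_div, hJrow y]
        field_simp
  -- distortion of the induced quantizer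
  have hdist' : (∑ y : B, ∑ y' : B, q y * k' y y' * d (h y) (h y')) ≤ D := by
    have e : ∀ y y', q y * k' y y' * d (h y) (h y')
        = ∑ x : A, ∑ x' : A, if g x = y ∧ g x' = y' then
            p x * k x x' * d (h y) (h y') else 0 := by
      intro y y'
      rw [hqk' y y']
      simp only [hJdef]
      rw [Finset.sum_mul]
      refine Finset.sum_congr rfl fun x _ => ?_
      rw [Finset.sum_mul]
      refine Finset.sum_congr rfl fun x' _ => ?_
      split <;> simp
    calc (∑ y : B, ∑ y' : B, q y * k' y y' * d (h y) (h y'))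
        = ∑ y : B, ∑ y' : B, ∑ x : A, ∑ x' : A, if g x = y ∧ g x' = y' then
            p x * k x x' * d (h y) (h y') else 0 :=
          Finset.sum_congr rfl fun y _ => Finset.sum_congr rfl fun y' _ => e y y'
      _ = ∑ x : A, ∑ x' : A, p x * k x x' * d (h (g x)) (h (g x')) := by
          have h1 : ∀ y : B, (∑ y' : B, ∑ x : A, ∑ x' : A, if g x = y ∧ g x' = y' then
              p x * k x x' * d (h y) (h y') else 0)
              = ∑ x : A, ∑ x' : A, if g x = y then
                  p x * k x x' * d (h y) (h (g x')) else 0 := by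
            intro y
            rw [Finset.sum_comm]
            refine Finset.sum_congr rfl fun x _ => ?_
            rw [Finset.sum_comm]
            refine Finset.sum_congr rfl fun x' _ => ?_
            by_cases hgx : g x = y
            · simp [ite_and, hgx, Finset.sum_ite_eq]
            · simp [ite_and, hgx]
          rw [Finset.sum_congr rfl fun y _ => h1 y, Finset.sum_comm]
          refine Finset.sum_congr rfl fun x _ => ?_
          rw [Finset.sum_comm]
          refine Finset.sum_congr rfl fun x' _ => ?_
          simp [Finset.sum_ite_eq]
      _ ≤ D := hdist
  -- the rate of the induced quantizer
  have hJeq : (fun y y' => q y * k' y y') = J := by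
    funext y y'; exact hqk' y y'
  have hrate : jointMI (fun y y' => q y * k' y y') ≤ jointMI (fun x x' => p x * k x x') := by
    rw [hJeq, hJdef]
    exact jointMI_push_le (fun x x' => p x * k x x')
      (fun x x' => mul_nonneg (hp0 x) (hk.1 x x')) g g
  have hmem : jointMI (fun y y' => q y * k' y y') ∈ SY := by
    rw [hSY]
    exact ⟨k', hker', hdist', rfl⟩
  exact le_trans (csInf_le hbdd hmem) hrate
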